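/- (Singular-value hard-ridge thresholding solves the rank-Frobenius penalized problem) Let Y ∈ ℝ^{n×m} with singular value decomposition Y = U diag(σ_i(Y)) Vᵀ, and let λ > 0, η ≥ 0, with no singular value of Y equal to λ. Then B̂ = U diag(Θ_HR(σ_i(Y);λ,η)) Vᵀ is the unique global minimizer over B ∈ ℝ^{n×m} of ‖Y−B‖_F²/2 + (η/2)‖B‖_F² + (λ²/(2(1+η)))·rank(B). -/

import Mathlib

set_option maxHeartbeats 1000000


open Matrix
open Module

/-- Squared Frobenius norm of a real matrix. -/
def frobSq {n m : ℕ} (A : Matrix (Fin n) (Fin m) ℝ) : ℝ := ∑ i, ∑ j, A i j ^ 2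

/-- `(U, σ, V)` is a (reduced) singular value decomposition of the real `n × m` matrix `B`. -/
def IsSVD {n m k : ℕ} (B : Matrix (Fin n) (Fin m) ℝ) (U : Matrix (Fin n) (Fin k) ℝ)
    (σ : Fin k → ℝ) (V : Matrix (Fin m) (Fin k) ℝ) : Prop :=
  Uᵀ * U = 1 ∧ Vᵀ * V = 1 ∧ Antitone σ ∧ (∀ i, 0 ≤ σ i) ∧ B = U * diagonal σ * Vᵀ

/-- The hard-ridge thresholding rule `Θ_HR(t;λ,η)`. -/
noncomputable def thetaHR (lam η t : ℝ) : ℝ := if |t| < lam then 0 else t / (1 + η)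

/-- Singular-value hard-ridge thresholding solves the rank-Frobenius penalized problem: with
`λ > 0`, `η ≥ 0`, and no singular value of `Y` equal to `λ`,
`B̂ = U diag(Θ_HR(σ_i(Y);λ,η)) Vᵀ` is the unique global minimizer of
`‖Y−B‖_F²/2 + (η/2)‖B‖_F² + (λ²/(2(1+η)))·rank(B)`. -/
lemma frobSq_eq_trace {n m : ℕ} (A : Matrix (Fin n) (Fin m) ℝ) :
    frobSq A = Matrix.trace (Aᵀ * A) := by
  simp only [frobSq, Matrix.trace, Matrix.diag, Matrix.mul_apply, transpose_apply, sq]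
  exact Finset.sum_comm

lemma frobSq_nonneg {n m : ℕ} (A : Matrix (Fin n) (Fin m) ℝ) : 0 ≤ frobSq A := by
  apply Finset.sum_nonneg; intro i _; apply Finset.sum_nonneg; intro j _; positivity

lemma frobSq_pos {n m : ℕ} {A : Matrix (Fin n) (Fin m) ℝ} (h : A ≠ 0) : 0 < frobSq A := by
  rcases (frobSq_nonneg A).lt_or_eq with h1 | h1
  · exact h1
  · exfalso; apply h
    ext i j
    have h2 : ∀ i ∈ Finset.univ, (0:ℝ) ≤ ∑ j, A i j ^ 2 := by
      intro i _; apply Finset.sum_nonneg; intro j _; positivity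
    have h3 := (Finset.sum_eq_zero_iff_of_nonneg h2).mp h1.symm i (Finset.mem_univ i)
    have h4 := (Finset.sum_eq_zero_iff_of_nonneg (fun j _ => sq_nonneg (A i j))).mp h3 j
      (Finset.mem_univ j)
    simpa using pow_eq_zero_iff (n := 2) (by norm_num) |>.mp h4

lemma trace_tmul_comm {n m : ℕ} (A B : Matrix (Fin n) (Fin m) ℝ) :
    Matrix.trace (Aᵀ * B) = Matrix.trace (Bᵀ * A) := by
  rw [← Matrix.trace_transpose, transpose_mul, transpose_transpose]

lemma frobSq_sub {n m : ℕ} (A B : Matrix (Fin n) (Fin m) ℝ) :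
    frobSq (A - B) = frobSq A - 2 * Matrix.trace (Aᵀ * B) + frobSq B := by
  simp only [frobSq_eq_trace, transpose_sub, Matrix.sub_mul, Matrix.mul_sub, Matrix.trace_sub]
  rw [trace_tmul_comm B A]
  ring

lemma frobSq_smul {n m : ℕ} (a : ℝ) (A : Matrix (Fin n) (Fin m) ℝ) :
    frobSq (a • A) = a ^ 2 * frobSq A := by
  simp only [frobSq, Matrix.smul_apply, smul_eq_mul, mul_pow, Finset.mul_sum]

lemma trace_smul_right {n m : ℕ} (a : ℝ) (A B : Matrix (Fin n) (Fin m) ℝ) :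
    Matrix.trace (Aᵀ * (a • B)) = a * Matrix.trace (Aᵀ * B) := by
  rw [Matrix.mul_smul, Matrix.trace_smul]; rfl

lemma trace_conj {n m k : ℕ} {U : Matrix (Fin n) (Fin k) ℝ} {V : Matrix (Fin m) (Fin k) ℝ}
    (hU : Uᵀ * U = 1) (hV : Vᵀ * V = 1) (d e : Fin k → ℝ) :
    Matrix.trace ((U * diagonal d * Vᵀ)ᵀ * (U * diagonal e * Vᵀ)) = ∑ i, d i * e i := by
  have hUX : ∀ p : ℕ, ∀ X : Matrix (Fin k) (Fin p) ℝ, Uᵀ * (U * X) = X := by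
    intro p X; rw [← Matrix.mul_assoc, hU, Matrix.one_mul]
  have h1 : (U * diagonal d * Vᵀ)ᵀ * (U * diagonal e * Vᵀ)
      = V * (diagonal d * (diagonal e * Vᵀ)) := by
    simp only [transpose_mul, transpose_transpose, diagonal_transpose, Matrix.mul_assoc]
    rw [hUX]
  rw [h1, ← Matrix.mul_assoc, ← Matrix.mul_assoc, Matrix.trace_mul_cycle, ← Matrix.mul_assoc,
    hV, Matrix.one_mul, diagonal_mul_diagonal, Matrix.trace_diagonal]

lemma rank_conj {n m k : ℕ} {U : Matrix (Fin n) (Fin k) ℝ} {V : Matrix (Fin m) (Fin k) ℝ}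
    (hU : Uᵀ * U = 1) (hV : Vᵀ * V = 1) (d : Fin k → ℝ) :
    (U * diagonal d * Vᵀ).rank = Fintype.card {i // d i ≠ 0} := by
  apply le_antisymm
  · calc (U * diagonal d * Vᵀ).rank ≤ (U * diagonal d).rank := Matrix.rank_mul_le_left _ _
      _ ≤ (diagonal d).rank := Matrix.rank_mul_le_right _ _
      _ = _ := Matrix.rank_diagonal d
  · have h : diagonal d = Uᵀ * (U * diagonal d * Vᵀ) * V := by
      rw [Matrix.mul_assoc, Matrix.mul_assoc, Matrix.mul_assoc, hV, Matrix.mul_one,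
        ← Matrix.mul_assoc, hU, Matrix.one_mul]
    calc Fintype.card {i // d i ≠ 0} = (diagonal d).rank := (Matrix.rank_diagonal d).symm
      _ = (Uᵀ * (U * diagonal d * Vᵀ) * V).rank := by rw [← h]
      _ ≤ (Uᵀ * (U * diagonal d * Vᵀ)).rank := Matrix.rank_mul_le_left _ _
      _ ≤ _ := Matrix.rank_mul_le_right _ _

lemma exists_ortho_fact {n m : ℕ} (B : Matrix (Fin n) (Fin m) ℝ) :
    ∃ (W : Matrix (Fin n) (Fin B.rank) ℝ) (C : Matrix (Fin B.rank) (Fin m) ℝ),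
      Wᵀ * W = 1 ∧ B = W * C := by
  classical
  set S : Submodule ℝ (EuclideanSpace ℝ (Fin n)) := LinearMap.range (toEuclideanLin B) with hS
  have hfr : finrank ℝ S = B.rank := by
    rw [B.rank_eq_finrank_range_toLin (PiLp.basisFun 2 ℝ (Fin n)) (PiLp.basisFun 2 ℝ (Fin m))]
    rw [hS, toEuclideanLin_eq_toLin]
  have ob : OrthonormalBasis (Fin B.rank) ℝ S :=
    (stdOrthonormalBasis ℝ S).reindex (finCongr hfr)
  set W : Matrix (Fin n) (Fin B.rank) ℝ :=
    Matrix.of (fun a i => WithLp.equiv 2 (Fin n → ℝ) ((ob i : S) : EuclideanSpace ℝ (Fin n)) a)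
    with hW
  have hWo : Wᵀ * W = 1 := by
    ext i j
    have horth := ob.orthonormal
    rw [orthonormal_iff_ite] at horth
    have := horth i j
    rw [Submodule.coe_inner, PiLp.inner_apply] at this
    simp only [RCLike.inner_apply, conj_trivial] at this
    simp only [Matrix.mul_apply, Matrix.one_apply, transpose_apply, hW, Matrix.of_apply]
    rw [← this]
    exact Finset.sum_congr rfl fun x _ => mul_comm _ _
  have hcolmem : ∀ j : Fin m, ((WithLp.equiv 2 (Fin n → ℝ)).symm (fun a => B a j)) ∈ S := by
    intro j
    refine ⟨(WithLp.equiv 2 (Fin m → ℝ)).symm (Pi.single j 1), ?_⟩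
    rw [WithLp.equiv_symm_apply, Matrix.toEuclideanLin_apply_piLp_toLp]
    congr 1
    ext a
    simp [Matrix.mulVec_single]
  set C : Matrix (Fin B.rank) (Fin m) ℝ :=
    Matrix.of (fun i j => ob.repr ⟨_, hcolmem j⟩ i) with hC
  refine ⟨W, C, hWo, ?_⟩
  ext a j
  have hrep := ob.sum_repr ⟨_, hcolmem j⟩
  have hrep' := congrArg
    (fun x : S => WithLp.equiv 2 (Fin n → ℝ) (x : EuclideanSpace ℝ (Fin n)) a) hrep
  simp only at hrep'
  rw [Matrix.mul_apply]
  rw [show B a j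
      = WithLp.equiv 2 (Fin n → ℝ) (((⟨_, hcolmem j⟩ : S) : EuclideanSpace ℝ (Fin n))) a from rfl]
  rw [← hrep']
  push_cast
  have key : ∀ (s : Finset (Fin B.rank)), (WithLp.equiv 2 (Fin n → ℝ))
      (∑ x ∈ s, ob.repr ⟨_, hcolmem j⟩ x • ((ob x : S) : EuclideanSpace ℝ (Fin n))) a
      = ∑ x ∈ s, ob.repr ⟨_, hcolmem j⟩ x * W a x := by
    intro s
    induction s using Finset.induction with
    | empty => rfl
    | @insert x s hx ih =>
      rw [Finset.sum_insert hx, Finset.sum_insert hx, ← ih]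
      rfl
  rw [key]
  apply Finset.sum_congr rfl
  intro i _
  rw [hC]
  simp only [Matrix.of_apply]
  ring

/-- Singular-value hard-ridge thresholding solves the rank-Frobenius penalized problem: with
`λ > 0`, `η ≥ 0`, and no singular value of `Y` equal to `λ`,
`B̂ = U diag(Θ_HR(σ_i(Y);λ,η)) Vᵀ` is the unique global minimizer of
`‖Y−B‖_F²/2 + (η/2)‖B‖_F² + (λ²/(2(1+η)))·rank(B)`. -/
theorem hard_ridge_thresholding_rank_frobenius {n m : ℕ}
    (lam η : ℝ) (hlam : 0 < lam) (hη : 0 ≤ η)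
    (Y : Matrix (Fin n) (Fin m) ℝ)
    (U : Matrix (Fin n) (Fin (min n m)) ℝ) (σ : Fin (min n m) → ℝ)
    (V : Matrix (Fin m) (Fin (min n m)) ℝ)
    (hY : IsSVD Y U σ V)
    (hnotie : ∀ i, σ i ≠ lam) :
    ∀ B : Matrix (Fin n) (Fin m) ℝ,
      B ≠ U * diagonal (fun i => thetaHR lam η (σ i)) * Vᵀ →
      frobSq (Y - U * diagonal (fun i => thetaHR lam η (σ i)) * Vᵀ) / 2
          + η / 2 * frobSq (U * diagonal (fun i => thetaHR lam η (σ i)) * Vᵀ)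
          + lam ^ 2 / (2 * (1 + η))
            * ((U * diagonal (fun i => thetaHR lam η (σ i)) * Vᵀ).rank : ℝ)
        < frobSq (Y - B) / 2 + η / 2 * frobSq B + lam ^ 2 / (2 * (1 + η)) * (B.rank : ℝ) := by
  classical
  obtain ⟨hU, hV, -, hσ0, hYd⟩ := hY
  intro B hB
  have h1η : (0:ℝ) < 1 + η := by linarith
  set θ : Fin (min n m) → ℝ := fun i => thetaHR lam η (σ i) with hθdef
  set Bh : Matrix (Fin n) (Fin m) ℝ := U * diagonal θ * Vᵀ with hBhdef
  set ind : Fin (min n m) → ℝ := fun i => if lam < σ i then 1 else 0 with hinddef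
  have hσlt : ∀ i, ¬ lam < σ i → σ i < lam := fun i h => lt_of_le_of_ne (not_lt.mp h) (hnotie i)
  have hθ : ∀ i, θ i = if lam < σ i then σ i / (1+η) else 0 := by
    intro i
    by_cases h : lam < σ i
    · simp [hθdef, thetaHR, abs_of_nonneg (hσ0 i), not_lt.mpr (le_of_lt h), h]
    · simp [hθdef, thetaHR, abs_of_nonneg (hσ0 i), hσlt i h, h]
  -- diagonal computations for Bh
  have hfBh : frobSq Bh = ∑ i, θ i ^ 2 := by
    rw [hBhdef, frobSq_eq_trace, trace_conj hU hV]
    exact Finset.sum_congr rfl (fun i _ => (pow_two (θ i)).symm)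
  have hYBh : Matrix.trace (Yᵀ * Bh) = ∑ i, σ i * θ i := by
    rw [hYd, hBhdef, trace_conj hU hV]
  have hrankBh : ((Bh.rank : ℝ)) = ∑ i, ind i := by
    rw [hBhdef, rank_conj hU hV, Fintype.card_subtype]
    have hiff : ∀ i, θ i ≠ 0 ↔ lam < σ i := by
      intro i
      rw [hθ i]
      by_cases h : lam < σ i
      · simp only [if_pos h]
        exact iff_of_true (ne_of_gt (div_pos (lt_trans hlam h) h1η)) h
      · simp [h]
    rw [Finset.filter_congr (fun i _ => by rw [hiff i])]
    rw [hinddef, Finset.sum_boole]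
  -- factorization of B
  obtain ⟨W, Cc, hWo, hBWC⟩ := exists_ortho_fact B
  set P : Matrix (Fin n) (Fin n) ℝ := W * Wᵀ with hPdef
  have hPt : Pᵀ = P := by rw [hPdef, transpose_mul, transpose_transpose]
  have hWX : ∀ p : ℕ, ∀ X : Matrix (Fin B.rank) (Fin p) ℝ, W * Wᵀ * (W * X) = W * X := by
    intro p X
    rw [Matrix.mul_assoc W Wᵀ _, ← Matrix.mul_assoc Wᵀ W X, hWo, Matrix.one_mul]
  have hPP : P * P = P := by rw [hPdef]; exact hWX _ Wᵀ
  have hPB : P * B = B := by rw [hBWC, hPdef]; exact hWX _ Cc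
  have htrP : Matrix.trace P = (B.rank : ℝ) := by
    rw [hPdef, Matrix.trace_mul_comm, hWo, Matrix.trace_one]
    simp
  set Q : Matrix (Fin (min n m)) (Fin (min n m)) ℝ := Uᵀ * (P * U) with hQdef
  have hQ1 : (P * U)ᵀ * (P * U) = Q := by
    calc (P * U)ᵀ * (P * U) = Uᵀ * (Pᵀ * (P * U)) := by rw [transpose_mul, Matrix.mul_assoc]
      _ = Uᵀ * (P * U) := by rw [hPt, ← Matrix.mul_assoc P P U, hPP]
  have hp0 : ∀ i, Q i i = ∑ a, ((P * U) a i) ^ 2 := by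
    intro i
    rw [← hQ1]
    simp only [Matrix.mul_apply, Matrix.transpose_apply, transpose_mul, sq]
    refine Finset.sum_congr rfl fun x _ => ?_
    congr 1
    exact Finset.sum_congr rfl fun j _ => mul_comm _ _
  have h1Pt : (1 - P)ᵀ = 1 - P := by rw [transpose_sub, transpose_one, hPt]
  have h1PP : (1 - P) * (1 - P) = 1 - P := by
    rw [Matrix.sub_mul, Matrix.one_mul, Matrix.mul_sub, Matrix.mul_one, hPP, sub_self, sub_zero]
  have hQ2 : ((1 - P) * U)ᵀ * ((1 - P) * U) = 1 - Q := by
    calc ((1 - P) * U)ᵀ * ((1 - P) * U) = Uᵀ * ((1 - P) * ((1 - P) * U)) := by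
          rw [transpose_mul, h1Pt, Matrix.mul_assoc]
      _ = Uᵀ * ((1 - P) * U) := by rw [← Matrix.mul_assoc (1 - P) (1 - P) U, h1PP]
      _ = 1 - Q := by
          rw [Matrix.sub_mul, Matrix.one_mul, Matrix.mul_sub, hU, hQdef]
  have hp1 : ∀ i, 1 - Q i i = ∑ a, ((((1 : Matrix (Fin n) (Fin n) ℝ) - P) * U) a i) ^ 2 := by
    intro i
    have h := congrArg (fun M => M i i) hQ2
    simp only [Matrix.sub_apply, Matrix.one_apply_eq] at h
    rw [← h]
    simp only [Matrix.mul_apply, Matrix.transpose_apply, transpose_mul, sq]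
    refine Finset.sum_congr rfl fun x _ => ?_
    congr 1
    exact Finset.sum_congr rfl fun j _ => mul_comm _ _
  have hpge : ∀ i, 0 ≤ Q i i := by
    intro i; rw [hp0 i]; exact Finset.sum_nonneg fun a _ => sq_nonneg _
  have hple : ∀ i, Q i i ≤ 1 := by
    intro i
    have : 0 ≤ 1 - Q i i := by
      rw [hp1 i]; exact Finset.sum_nonneg fun a _ => sq_nonneg _
    linarith
  -- τ computation
  have hQfold : ∀ p : ℕ, ∀ X : Matrix (Fin (min n m)) (Fin p) ℝ,
      Uᵀ * (P * (U * X)) = Q * X := by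
    intro p X
    rw [hQdef, Matrix.mul_assoc Uᵀ (P * U) X, Matrix.mul_assoc P U X]
  have hτ : Matrix.trace (Yᵀ * (P * Y)) = ∑ i, σ i ^ 2 * Q i i := by
    have h1 : Yᵀ * (P * Y) = V * ((diagonal σ * (Q * diagonal σ)) * Vᵀ) := by
      rw [hYd]
      simp only [transpose_mul, transpose_transpose, diagonal_transpose, Matrix.mul_assoc]
      rw [hQfold]
    rw [h1, Matrix.trace_mul_comm, Matrix.mul_assoc, hV, Matrix.mul_one]
    rw [show Matrix.trace (diagonal σ * (Q * diagonal σ))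
        = ∑ i, σ i * (Q i i * σ i) from by
      simp [Matrix.trace, Matrix.diag, Matrix.diagonal_mul, Matrix.mul_diagonal]]
    exact Finset.sum_congr rfl fun i _ => by ring
  have hfPY : frobSq (P * Y) = Matrix.trace (Yᵀ * (P * Y)) := by
    rw [frobSq_eq_trace, transpose_mul, Matrix.mul_assoc, hPt, ← Matrix.mul_assoc P P Y, hPP]
  have hYPB : Matrix.trace (Bᵀ * (P * Y)) = Matrix.trace (Yᵀ * B) := by
    rw [trace_tmul_comm, transpose_mul, Matrix.mul_assoc, hPt, hPB]
  -- main quadratic identity for B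
  have hGB : (1+η)/2 * frobSq B - Matrix.trace (Yᵀ * B)
      = (1+η)/2 * frobSq (B - (1/(1+η)) • (P * Y))
        - (1/(2*(1+η))) * (∑ i, σ i ^ 2 * Q i i) := by
    rw [frobSq_sub, trace_smul_right, hYPB, frobSq_smul, hfPY, hτ]
    field_simp
    ring
  -- trace P decomposition
  have hT2 : Matrix.trace P = Matrix.trace Q + frobSq (P * (1 - U * Uᵀ)) := by
    have hMt : (1 - U * Uᵀ)ᵀ = 1 - U * Uᵀ := by
      rw [transpose_sub, transpose_one, transpose_mul, transpose_transpose]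
    have hMM : (1 - U * Uᵀ) * (1 - U * Uᵀ) = 1 - U * Uᵀ := by
      rw [Matrix.sub_mul, Matrix.one_mul, Matrix.mul_sub, Matrix.mul_one]
      rw [Matrix.mul_assoc U Uᵀ _, ← Matrix.mul_assoc Uᵀ U Uᵀ, hU, Matrix.one_mul,
        sub_self, sub_zero]
    have h1 : frobSq (P * (1 - U * Uᵀ)) = Matrix.trace (P * (1 - U * Uᵀ)) := by
      rw [frobSq_eq_trace, transpose_mul, hMt, hPt]
      rw [Matrix.mul_assoc, ← Matrix.mul_assoc P P _, hPP]
      rw [Matrix.trace_mul_comm, Matrix.mul_assoc, hMM]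
    have h2 : Matrix.trace (P * (U * Uᵀ)) = Matrix.trace Q := by
      rw [← Matrix.mul_assoc, Matrix.trace_mul_comm, hQdef, Matrix.mul_assoc]
    rw [h1, Matrix.mul_sub, Matrix.mul_one, Matrix.trace_sub, h2]
    ring
  have htrQ : Matrix.trace Q = ∑ i, Q i i := rfl
  have h1ne : (1+η) ≠ 0 := ne_of_gt h1η
  -- pointwise sum identity
  have hsum : ∑ i, (lam^2 - σ i ^2)/(2*(1+η)) * (Q i i - ind i)
      = lam^2/(2*(1+η)) * (∑ i, Q i i) - 1/(2*(1+η)) * (∑ i, σ i ^2 * Q i i)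
        - (∑ i, ((1+η)/2 * θ i ^2 - σ i * θ i)) - lam^2/(2*(1+η)) * (∑ i, ind i) := by
    rw [Finset.mul_sum, Finset.mul_sum, Finset.mul_sum, ← Finset.sum_sub_distrib,
      ← Finset.sum_sub_distrib, ← Finset.sum_sub_distrib]
    apply Finset.sum_congr rfl
    intro i _
    simp only [hθ i, hinddef]
    by_cases h : lam < σ i
    · simp only [if_pos h]
      field_simp
      ring
    · simp only [if_neg h]
      ring
  have hGBh : (1+η)/2 * frobSq Bh - Matrix.trace (Yᵀ * Bh)
      = ∑ i, ((1+η)/2 * θ i ^2 - σ i * θ i) := by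
    rw [hfBh, hYBh, Finset.mul_sum, ← Finset.sum_sub_distrib]
  -- nonnegativity of the pointwise terms
  have hcoefneg : ∀ i, lam < σ i → (lam^2 - σ i ^2)/(2*(1+η)) < 0 := by
    intro i h
    apply div_neg_of_neg_of_pos
    · nlinarith
    · linarith
  have hcoefpos : ∀ i, ¬ lam < σ i → 0 < (lam^2 - σ i ^2)/(2*(1+η)) := by
    intro i h
    apply div_pos
    · have := hσlt i h
      have := hσ0 i
      nlinarith
    · linarith
  have ht0 : ∀ i, 0 ≤ (lam^2 - σ i ^2)/(2*(1+η)) * (Q i i - ind i) := by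
    intro i
    by_cases h : lam < σ i
    · have hq : Q i i - ind i ≤ 0 := by
        simp only [hinddef]
        rw [if_pos h]
        linarith [hple i]
      calc (0:ℝ) ≤ (-((lam^2 - σ i ^2)/(2*(1+η)))) * (-(Q i i - ind i)) :=
            mul_nonneg (by linarith [hcoefneg i h]) (by linarith)
        _ = (lam^2 - σ i ^2)/(2*(1+η)) * (Q i i - ind i) := by ring
    · apply mul_nonneg (le_of_lt (hcoefpos i h))
      simp only [hinddef, if_neg h]
      linarith [hpge i]
  have hcoefne : ∀ i, (lam^2 - σ i ^2)/(2*(1+η)) ≠ 0 := by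
    intro i
    by_cases h : lam < σ i
    · exact ne_of_lt (hcoefneg i h)
    · exact ne_of_gt (hcoefpos i h)
  -- the strict positivity of the gap
  have key : 0 < (1+η)/2 * frobSq (B - (1/(1+η)) • (P * Y))
      + lam^2/(2*(1+η)) * frobSq (P * (1 - U * Uᵀ))
      + ∑ i, (lam^2 - σ i ^2)/(2*(1+η)) * (Q i i - ind i) := by
    have hc2 : 0 ≤ lam^2/(2*(1+η)) * frobSq (P * (1 - U * Uᵀ)) :=
      mul_nonneg (by positivity) (frobSq_nonneg _)
    by_cases hBP : B = (1/(1+η)) • (P * Y)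
    · have hQne : ¬ ∀ i, Q i i = ind i := by
        intro hall
        apply hB
        have hPU : P * U = U * diagonal ind := by
          ext a i
          rw [Matrix.mul_diagonal]
          by_cases h : lam < σ i
          · have h1 : 1 - Q i i = 0 := by rw [hall i]; simp [hinddef, h]
            have h2 : ∑ a, ((((1 : Matrix (Fin n) (Fin n) ℝ) - P) * U) a i)^2 = 0 := by rw [← hp1 i, h1]
            have h3 := (Finset.sum_eq_zero_iff_of_nonneg
              (fun a _ => sq_nonneg _)).mp h2 a (Finset.mem_univ a)
            have h4 : (((1 : Matrix (Fin n) (Fin n) ℝ) - P) * U) a i = 0 :=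
              (pow_eq_zero_iff (two_ne_zero)).mp h3
            rw [Matrix.sub_mul, Matrix.one_mul, Matrix.sub_apply] at h4
            simp only [hinddef, if_pos h, mul_one]
            linarith [h4]
          · have h1 : Q i i = 0 := by rw [hall i]; simp [hinddef, h]
            have h2 : ∑ a, ((P * U) a i)^2 = 0 := by rw [← hp0 i, h1]
            have h3 := (Finset.sum_eq_zero_iff_of_nonneg
              (fun a _ => sq_nonneg _)).mp h2 a (Finset.mem_univ a)
            have h4 : (P * U) a i = 0 := (pow_eq_zero_iff (two_ne_zero)).mp h3
            simp only [hinddef, if_neg h, mul_zero]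
            exact h4
        rw [hBP, hYd, hBhdef]
        rw [← Matrix.mul_assoc P (U * diagonal σ) Vᵀ, ← Matrix.mul_assoc P U (diagonal σ), hPU]
        rw [Matrix.mul_assoc U (diagonal ind) (diagonal σ), diagonal_mul_diagonal]
        rw [← Matrix.smul_mul, ← Matrix.mul_smul, ← Matrix.diagonal_smul]
        have hfun : ((1/(1+η)) • (fun i => ind i * σ i) : Fin (min n m) → ℝ) = θ := by
          funext i
          rw [Pi.smul_apply, smul_eq_mul, hθ i]
          simp only [hinddef]
          by_cases h : lam < σ i
          · simp [h]
            ring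
          · simp [h]
        rw [hfun]
      push_neg at hQne
      obtain ⟨i0, hi0⟩ := hQne
      have hti : 0 < (lam^2 - σ i0 ^2)/(2*(1+η)) * (Q i0 i0 - ind i0) :=
        (ht0 i0).lt_of_ne (Ne.symm (mul_ne_zero (hcoefne i0) (sub_ne_zero.mpr hi0)))
      have hsumpos : 0 < ∑ i, (lam^2 - σ i ^2)/(2*(1+η)) * (Q i i - ind i) :=
        Finset.sum_pos' (fun i _ => ht0 i) ⟨i0, Finset.mem_univ _, hti⟩
      have hD := frobSq_nonneg (B - (1/(1+η)) • (P * Y))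
      nlinarith
    · have hne : B - (1/(1+η)) • (P * Y) ≠ 0 := sub_ne_zero.mpr hBP
      have h1 : 0 < frobSq (B - (1/(1+η)) • (P * Y)) := frobSq_pos hne
      have h2 : 0 ≤ ∑ i, (lam^2 - σ i ^2)/(2*(1+η)) * (Q i i - ind i) :=
        Finset.sum_nonneg (fun i _ => ht0 i)
      nlinarith
  -- final assembly
  have hrB : (B.rank : ℝ) = ∑ i, Q i i + frobSq (P * (1 - U * Uᵀ)) := by
    rw [← htrP, hT2, htrQ]
  have hfinal : (frobSq (Y - B)/2 + η/2 * frobSq B + lam^2/(2*(1+η)) * (B.rank : ℝ))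
      - (frobSq (Y - Bh)/2 + η/2 * frobSq Bh + lam^2/(2*(1+η)) * ((Bh.rank : ℝ)))
      = (1+η)/2 * frobSq (B - (1/(1+η)) • (P * Y))
        + lam^2/(2*(1+η)) * frobSq (P * (1 - U * Uᵀ))
        + ∑ i, (lam^2 - σ i ^2)/(2*(1+η)) * (Q i i - ind i) := by
    rw [frobSq_sub Y B, frobSq_sub Y Bh, hrankBh, hrB]
    linear_combination hGB - hGBh - hsum
  linarith [hfinal, key]
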